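/- Let $(\xi(z))_{z\in\mathbb{Z}^d}$ be i.i.d. standard exponential random variables, i.e. $P(\xi(z)>x)=e^{-x}$ for $x\ge 0$. For $r>0$ let $M_r=\max_{|z|\le r}\xi(z)$ (max over the $\ell^1$-ball of radius $r$). Then for every $c>0$, almost surely $M_r \ge d\log r - (1+c)\log\log\log r$ for all sufficiently large $r$. -/

import Mathlib

open MeasureTheory ProbabilityTheory Real Filter

noncomputable def auxA (d : ℕ) (c : ℝ) (k : ℕ) : ℝ :=
  d * (k + 1) - (1 + c) * Real.log (Real.log k)

noncomputable def auxM (d k : ℕ) : ℕ := ⌊Real.exp k / d⌋₊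

noncomputable def auxS (d k : ℕ) : Finset (Fin d → ℤ) :=
  Fintype.piFinset fun _ => Finset.Icc 0 (auxM d k)

lemma auxS_card (d k : ℕ) : (auxS d k).card = (auxM d k + 1) ^ d := by
  simp [auxS, Int.card_Icc]

lemma tail_meas {Ω : Type*} [MeasurableSpace Ω] (P : Measure Ω) [IsProbabilityMeasure P]
    (f : Ω → ℝ) (hf : Measurable f) (t : ℝ)
    (hlaw : P {ω | t < f ω} = ENNReal.ofReal (Real.exp (-t))) :
    P (f ⁻¹' Set.Iic t) = 1 - ENNReal.ofReal (Real.exp (-t)) := by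
  have h1 : f ⁻¹' Set.Iic t = {ω | t < f ω}ᶜ := by
    ext ω; simp [not_lt]
  have hms : MeasurableSet {ω | t < f ω} := hf measurableSet_Ioi
  rw [h1, measure_compl hms (measure_ne_top _ _), measure_univ, hlaw]

theorem max_potential_eventual_lower_bound
    {Ω : Type*} [MeasurableSpace Ω] (P : Measure Ω) [IsProbabilityMeasure P]
    (d : ℕ) (hd : 1 ≤ d) (ξ : (Fin d → ℤ) → Ω → ℝ)
    (hmeas : ∀ z, Measurable (ξ z))
    (hindep : iIndepFun (m := fun _ => (inferInstance : MeasurableSpace ℝ)) ξ P)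
    (hlaw : ∀ z, ∀ x : ℝ, 0 ≤ x → P {ω | x < ξ z ω} = ENNReal.ofReal (Real.exp (-x)))
    (c : ℝ) (hc : 0 < c) :
    ∀ᵐ ω ∂P, ∃ r₀ : ℝ, ∀ r ≥ r₀, ∃ z : Fin d → ℤ, (∑ i, |(z i : ℝ)|) ≤ r ∧
      d * Real.log r - (1 + c) * Real.log (Real.log (Real.log r)) ≤ ξ z ω := by
  have hdR : (1:ℝ) ≤ d := by exact_mod_cast hd
  have hd0 : (0:ℝ) < d := by linarith
  have h1c : (0:ℝ) < 1 + c := by linarith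
  set B : ℕ → Set Ω := fun k => ⋂ z ∈ auxS d k, ξ z ⁻¹' Set.Iic (auxA d c k) with hB
  -- eventual conditions
  have hLL : Tendsto (fun k : ℕ => Real.log (Real.log k)) atTop atTop :=
    (Real.tendsto_log_atTop.comp Real.tendsto_log_atTop).comp tendsto_natCast_atTop_atTop
  have hE3 : ∀ᶠ k : ℕ in atTop,
      Real.log 2 + d * Real.log d + d ≤ c * Real.log (Real.log k) := by
    filter_upwards [hLL.eventually_ge_atTop ((Real.log 2 + d * Real.log d + d) / c)] with k hk
    calc Real.log 2 + d * Real.log d + d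
        = c * ((Real.log 2 + d * Real.log d + d) / c) := by field_simp
      _ ≤ c * Real.log (Real.log k) := by
          exact mul_le_mul_of_nonneg_left hk hc.le
  have hE2 : ∀ᶠ k : ℕ in atTop, (1 + c) * Real.log (Real.log k) ≤ k := by
    have hlo := (Real.isLittleO_log_id_atTop.def (by positivity : (0:ℝ) < 1 / (1 + c)))
    filter_upwards [tendsto_natCast_atTop_atTop.eventually hlo,
      eventually_ge_atTop 3] with k hk hk3
    have hk3R : (3:ℝ) ≤ (k:ℝ) := by exact_mod_cast hk3
    have hlogk : 0 < Real.log k := Real.log_pos (by linarith)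
    have h1 : Real.log (Real.log k) ≤ Real.log k :=
      Real.log_le_log hlogk (by nlinarith [Real.log_le_sub_one_of_pos (by linarith : (0:ℝ) < k)])
    have h2 : Real.log (k:ℝ) ≤ 1 / (1 + c) * k := by
      have := hk
      simp only [Real.norm_eq_abs, id] at this
      calc Real.log (k:ℝ) ≤ |Real.log (k:ℝ)| := le_abs_self _
        _ ≤ 1 / (1 + c) * |(k:ℝ)| := this
        _ = 1 / (1 + c) * k := by rw [abs_of_nonneg (by linarith : (0:ℝ) ≤ (k:ℝ))]
    calc (1 + c) * Real.log (Real.log k) ≤ (1 + c) * Real.log k :=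
          mul_le_mul_of_nonneg_left h1 h1c.le
      _ ≤ (1 + c) * (1 / (1 + c) * k) := mul_le_mul_of_nonneg_left h2 h1c.le
      _ = k := by field_simp
  -- the key eventual measure bound
  have hbound : ∀ᶠ k : ℕ in atTop, P (B k) ≤ ENNReal.ofReal (((k:ℝ)^2)⁻¹) := by
    filter_upwards [hE2, hE3, eventually_ge_atTop 3] with k hk2 hk3' hk3
    have hk3R : (3:ℝ) ≤ (k:ℝ) := by exact_mod_cast hk3
    have hlogk : 0 < Real.log k := Real.log_pos (by linarith)
    set t := auxA d c k with hta
    set p := Real.exp (-t) with hpdef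
    have ht0 : 0 ≤ t := by
      have hkd : (k:ℝ) ≤ d * (k + 1) := by nlinarith
      simp only [hta, auxA]; linarith
    have hp0 : 0 < p := Real.exp_pos _
    have hp1 : p ≤ 1 := Real.exp_le_one_iff.2 (by linarith)
    set N : ℕ := (auxS d k).card with hN
    -- product formula
    have hprod : P (B k) = (1 - ENNReal.ofReal p) ^ N := by
      have h1 : P (B k) = ∏ z ∈ auxS d k, P (ξ z ⁻¹' Set.Iic t) :=
        hindep.measure_inter_preimage_eq_mul (auxS d k) (sets := fun _ => Set.Iic t)
          (fun i _ => measurableSet_Iic)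
      rw [h1]
      rw [Finset.prod_congr rfl fun z _ =>
        tail_meas P (ξ z) (hmeas z) t (hlaw z t ht0)]
      rw [Finset.prod_const]
    have hq : (1:ENNReal) - ENNReal.ofReal p = ENNReal.ofReal (1 - p) := by
      rw [ENNReal.ofReal_sub 1 hp0.le, ENNReal.ofReal_one]
    rw [hprod, hq, ← ENNReal.ofReal_pow (by linarith)]
    apply ENNReal.ofReal_le_ofReal
    -- real estimates
    have hx : (0:ℝ) < Real.exp k / d := by positivity
    have hm : Real.exp (k:ℝ) / d ≤ ((auxM d k : ℝ) + 1) := (Nat.lt_floor_add_one _).le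
    have hNge : (Real.exp k / d) ^ d ≤ (N:ℝ) := by
      rw [hN, auxS_card]
      push_cast
      exact pow_le_pow_left₀ hx.le hm d
    have hexp_eq : (Real.exp (k:ℝ) / d) ^ d * p = Real.exp (d * ((k:ℝ) - Real.log d) - t) := by
      rw [show Real.exp (k:ℝ) / d = Real.exp ((k:ℝ) - Real.log d) by
        rw [Real.exp_sub, Real.exp_log hd0]]
      rw [← Real.exp_nat_mul, ← Real.exp_add]
      ring_nf
    have hlog2k : 0 < 2 * Real.log k := by linarith
    have hkey : 2 * Real.log k ≤ (Real.exp (k:ℝ) / d) ^ d * p := by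
      rw [hexp_eq, ← Real.exp_log hlog2k]
      apply Real.exp_le_exp.2
      have hlm : Real.log (2 * Real.log k) = Real.log 2 + Real.log (Real.log k) :=
        Real.log_mul two_ne_zero (ne_of_gt hlogk)
      rw [hlm]
      simp only [hta, auxA]
      push_cast
      nlinarith [hk3']
    have hNp : 2 * Real.log k ≤ (N:ℝ) * p := by
      calc 2 * Real.log k ≤ (Real.exp (k:ℝ) / d) ^ d * p := hkey
        _ ≤ (N:ℝ) * p := mul_le_mul_of_nonneg_right hNge hp0.le
    calc (1 - p) ^ N ≤ Real.exp (-p) ^ N := by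
          apply pow_le_pow_left₀ (by linarith)
          linarith [Real.add_one_le_exp (-p)]
      _ = Real.exp (-((N:ℝ) * p)) := by rw [← Real.exp_nat_mul]; ring_nf
      _ ≤ Real.exp (-(2 * Real.log k)) := Real.exp_le_exp.2 (by linarith)
      _ = ((k:ℝ)^2)⁻¹ := by
          rw [Real.exp_neg, two_mul, Real.exp_add, Real.exp_log (by linarith : (0:ℝ) < k)]
          rw [pow_two]
  obtain ⟨K₂, hK₂⟩ := eventually_atTop.1 hbound
  -- Borel–Cantelli
  have hbase : Summable (fun n : ℕ => ((n:ℝ)^2)⁻¹) := by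
    simpa [one_div] using (summable_one_div_nat_pow (p := 2)).2 one_lt_two
  have hsummable : Summable (fun j : ℕ => (((j + K₂ : ℕ):ℝ)^2)⁻¹) :=
    (summable_nat_add_iff (f := fun n : ℕ => ((n:ℝ)^2)⁻¹) K₂).2 hbase
  have hsum : (∑' j : ℕ, P (B (j + K₂))) ≠ ⊤ := by
    have hle : (∑' j : ℕ, P (B (j + K₂))) ≤
        ∑' j : ℕ, ENNReal.ofReal ((((j + K₂ : ℕ)):ℝ)^2)⁻¹ :=
      ENNReal.tsum_le_tsum fun j => hK₂ (j + K₂) (Nat.le_add_left _ _)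
    rw [← ENNReal.ofReal_tsum_of_nonneg (fun j => by positivity) hsummable] at hle
    exact ne_top_of_le_ne_top ENNReal.ofReal_ne_top hle
  filter_upwards [ae_eventually_notMem hsum] with ω hω
  obtain ⟨K₃, hK₃⟩ := eventually_atTop.1 hω
  set K : ℕ := K₃ + K₂ + 3 with hK
  refine ⟨Real.exp ((K:ℝ) + 1), fun r hr => ?_⟩
  have hr0 : (0:ℝ) < r := lt_of_lt_of_le (Real.exp_pos _) hr
  have hlr : (K:ℝ) + 1 ≤ Real.log r := by
    rw [← Real.log_exp ((K:ℝ) + 1)]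
    exact Real.log_le_log (Real.exp_pos _) hr
  set k : ℕ := ⌊Real.log r⌋₊ with hk
  have hkK : K + 1 ≤ k := by
    apply Nat.le_floor
    push_cast at hlr ⊢
    linarith
  have hlr0 : (0:ℝ) ≤ Real.log r := le_trans (by positivity) hlr
  have hklr : (k:ℝ) ≤ Real.log r := Nat.floor_le (by linarith)
  have hnot : ω ∉ B k := by
    have h := hK₃ (k - K₂) (by omega)
    rwa [Nat.sub_add_cancel (by omega)] at h
  simp only [hB, Set.mem_iInter, Set.mem_preimage, Set.mem_Iic, not_forall] at hnot
  obtain ⟨z, hzS, hzval⟩ := hnot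
  push_neg at hzval
  refine ⟨z, ?_, ?_⟩
  · -- norm bound
    have hzc : ∀ i, z i ∈ Finset.Icc (0:ℤ) (auxM d k) := fun i =>
      Fintype.mem_piFinset.1 hzS i
    have hmle : ((auxM d k : ℝ)) ≤ Real.exp (k:ℝ) / d :=
      Nat.floor_le (by positivity)
    have hsum1 : (∑ i, |(z i : ℝ)|) ≤ ∑ _i : Fin d, ((auxM d k : ℝ)) := by
      apply Finset.sum_le_sum
      intro i _
      obtain ⟨h0, h1⟩ := Finset.mem_Icc.1 (hzc i)
      rw [abs_of_nonneg (by exact_mod_cast h0)]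
      exact_mod_cast h1
    have hsum2 : (∑ _i : Fin d, ((auxM d k : ℝ))) = d * (auxM d k : ℝ) := by
      simp [Finset.sum_const, mul_comm]
    calc (∑ i, |(z i : ℝ)|) ≤ d * (auxM d k : ℝ) := by rw [← hsum2]; exact hsum1
      _ ≤ d * (Real.exp (k:ℝ) / d) := mul_le_mul_of_nonneg_left hmle hd0.le
      _ = Real.exp (k:ℝ) := by field_simp
      _ ≤ Real.exp (Real.log r) := Real.exp_le_exp.2 hklr
      _ = r := Real.exp_log hr0
  · -- threshold bound
    have hk1 : (1:ℝ) < (k:ℝ) := by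
      have : (4:ℕ) ≤ k := by omega
      have : (4:ℝ) ≤ (k:ℝ) := by exact_mod_cast this
      linarith
    have hlogk : 0 < Real.log k := Real.log_pos hk1
    have l1 : Real.log (k:ℝ) ≤ Real.log (Real.log r) :=
      Real.log_le_log (by linarith) hklr
    have l2 : Real.log (Real.log (k:ℝ)) ≤ Real.log (Real.log (Real.log r)) :=
      Real.log_le_log hlogk l1
    have l3 : Real.log r < (k:ℝ) + 1 := Nat.lt_floor_add_one _
    have l4 : (d:ℝ) * Real.log r ≤ (d:ℝ) * ((k:ℝ) + 1) :=
      mul_le_mul_of_nonneg_left l3.le (by positivity)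
    have l5 : (1 + c) * Real.log (Real.log (k:ℝ)) ≤
        (1 + c) * Real.log (Real.log (Real.log r)) :=
      mul_le_mul_of_nonneg_left l2 h1c.le
    have : auxA d c k ≤ ξ z ω := hzval.le
    simp only [auxA] at this
    push_cast at this ⊢
    linarith
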